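/- Let X be a standard Borel space with probability measure μ, fix an integer d ≥ 2 and τ > 0, and let f : X → S^{d-1} be measurable. Define, for each integer K ≥ 1, L_neg(f; τ, K) := ∫ log( (1/K) Σ_{j=1}^{K} exp(⟨f(x), f(x_j)⟩/τ) ) dμ^{K+1}(x, x_1, …, x_K), the expectation being over K+1 independent samples from μ. Then L_neg(f; τ, K) converges as K → ∞ to ∫_X log( ∫_X exp(⟨f(x), f(x')⟩/τ) dμ(x') ) dμ(x). -/

import Mathlib

open MeasureTheory Metric Filter

lemma prod_pair_support {ι : Type*} [Fintype ι] [DecidableEq ι] {i j : ι} (hij : i ≠ j)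
    (v : ι → ℝ) (hv : ∀ k, k ≠ i → k ≠ j → v k = 1) : ∏ k, v k = v i * v j := by
  have h1 : ∏ k ∈ (Finset.univ.erase i).erase j, v k = 1 :=
    Finset.prod_eq_one fun k hk => by
      simp only [Finset.mem_erase, Finset.mem_univ, and_true] at hk
      exact hv k hk.2 hk.1
  rw [← Finset.mul_prod_erase Finset.univ v (Finset.mem_univ i),
    ← Finset.mul_prod_erase _ v
      (Finset.mem_erase.2 ⟨hij.symm, Finset.mem_univ j⟩), h1, mul_one]

lemma pi_integral_single {X : Type*} [MeasurableSpace X] (μ : Measure X) [IsProbabilityMeasure μ]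
    {ι : Type*} [Fintype ι] [DecidableEq ι] (g : X → ℝ) (j : ι) :
    ∫ y : ι → X, g (y j) ∂(Measure.pi fun _ => μ) = ∫ x, g x ∂μ := by
  letI : MeasureSpace X := { volume := μ }
  have key := MeasureTheory.integral_fintype_prod_eq_prod (𝕜 := ℝ) (ι := ι) (μ := fun _ => (volume : Measure X))
      (fun k => if k = j then g else fun _ => (1:ℝ))
  have h1 : ∀ y : ι → X, (∏ k, (if k = j then g else fun _ => (1:ℝ)) (y k)) = g (y j) := by
    intro y
    rw [Finset.prod_eq_single j (fun k _ hk => by simp only [if_neg hk])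
      (fun h => absurd (Finset.mem_univ j) h), if_pos rfl]
  have h2 : ∀ k : ι, (∫ x : X, (if k = j then g else fun _ => (1:ℝ)) x)
      = if k = j then ∫ x, g x ∂μ else 1 := by
    intro k
    split_ifs with h
    · rfl
    · simp
  simp only [h1, h2] at key
  rw [Finset.prod_ite_eq' Finset.univ j (fun _ => ∫ x, g x ∂μ)] at key
  simp at key
  exact key

lemma pi_integral_pair {X : Type*} [MeasurableSpace X] (μ : Measure X) [IsProbabilityMeasure μ]
    {ι : Type*} [Fintype ι] [DecidableEq ι] (g₁ g₂ : X → ℝ) {i j : ι} (hij : i ≠ j) :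
    ∫ y : ι → X, g₁ (y i) * g₂ (y j) ∂(Measure.pi fun _ => μ)
      = (∫ x, g₁ x ∂μ) * ∫ x, g₂ x ∂μ := by
  letI : MeasureSpace X := { volume := μ }
  have key := MeasureTheory.integral_fintype_prod_eq_prod (𝕜 := ℝ) (ι := ι) (μ := fun _ => (volume : Measure X))
      (fun k => if k = i then g₁ else if k = j then g₂ else fun _ => (1:ℝ))
  have h1 : ∀ y : ι → X,
      (∏ k, (if k = i then g₁ else if k = j then g₂ else fun _ => (1:ℝ)) (y k))
        = g₁ (y i) * g₂ (y j) := by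
    intro y
    rw [prod_pair_support hij _ (fun k hki hkj => by simp [hki, hkj])]
    simp [hij, hij.symm]
  have h2 : (∏ k : ι, ∫ x : X, (if k = i then g₁ else if k = j then g₂ else fun _ => (1:ℝ)) x)
      = (∫ x, g₁ x ∂μ) * ∫ x, g₂ x ∂μ := by
    rw [prod_pair_support hij _ (fun k hki hkj => by simp [hki, hkj])]
    simp only [if_pos rfl, if_neg hij.symm, if_neg hij]
    rfl
  rw [h2] at key
  simp only [h1] at key
  exact key

lemma log_taylor_bounds {A s t : ℝ} (hA : 0 < A) (hs : A ≤ s) (ht : A ≤ t) :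
    Real.log s + (t - s)/s - ((t-s)*(t-s))/(A*A) ≤ Real.log t ∧
      Real.log t ≤ Real.log s + (t - s)/s := by
  have hs0 : 0 < s := hA.trans_le hs
  have ht0 : 0 < t := hA.trans_le ht
  constructor
  · have h1 : Real.log (s/t) ≤ s/t - 1 := Real.log_le_sub_one_of_pos (div_pos hs0 ht0)
    rw [Real.log_div hs0.ne' ht0.ne'] at h1
    have h2 : s/t - 1 = -((t-s)/t) := by field_simp; ring
    have h3 : (t-s)/s - (t-s)/t = (t-s)*(t-s)/(s*t) := by field_simp
    have h4 : (t-s)*(t-s)/(s*t) ≤ (t-s)*(t-s)/(A*A) :=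
      div_le_div_of_nonneg_left (mul_self_nonneg _) (mul_pos hA hA)
        (mul_le_mul hs ht hA.le hs0.le)
    linarith
  · have h1 : Real.log (t/s) ≤ t/s - 1 := Real.log_le_sub_one_of_pos (div_pos ht0 hs0)
    rw [Real.log_div ht0.ne' hs0.ne'] at h1
    have h2 : t/s - 1 = (t-s)/s := by field_simp
    linarith

lemma pi_log_avg_bound {X : Type*} [MeasurableSpace X] (μ : Measure X) [IsProbabilityMeasure μ]
    {K : ℕ} (hK : 1 ≤ K) (q : X → ℝ) (hq : Measurable q)
    {A B : ℝ} (hA : 0 < A) (hab : ∀ z, A ≤ q z ∧ q z ≤ B) :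
    |(∫ y : Fin K → X, Real.log ((1/(K:ℝ)) * ∑ j : Fin K, q (y j))
        ∂(Measure.pi fun _ : Fin K => μ))
      - Real.log (∫ z, q z ∂μ)| ≤ ((B*B)/(A*A)) / K := by
  have hKpos : (0:ℝ) < K := by exact_mod_cast hK
  have hK0 : (K:ℝ) ≠ 0 := hKpos.ne'
  set π : Measure (Fin K → X) := Measure.pi fun _ : Fin K => μ with hπ
  haveI : IsProbabilityMeasure π := by rw [hπ]; exact MeasureTheory.Measure.pi.instIsProbabilityMeasure _
  set m : ℝ := ∫ z, q z ∂μ with hm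
  set S : (Fin K → X) → ℝ := fun y => (1/(K:ℝ)) * ∑ j : Fin K, q (y j) with hS
  have hB : 0 < B := by
    obtain ⟨z⟩ : Nonempty X := by
      by_contra h
      rw [not_nonempty_iff] at h
      have h0 : μ Set.univ = 1 := measure_univ
      rw [Set.univ_eq_empty_iff.mpr h, measure_empty] at h0
      exact zero_ne_one h0
    exact hA.trans_le ((hab z).1.trans (hab z).2)
  have hqint : Integrable q μ := by
    refine Integrable.mono' (integrable_const B) hq.aestronglyMeasurable ?_
    filter_upwards with z
    rw [Real.norm_eq_abs, abs_of_pos (hA.trans_le (hab z).1)]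
    exact (hab z).2
  have hmA : A ≤ m := by
    have := integral_mono (integrable_const A) hqint (fun z => (hab z).1)
    simpa [hm] using this
  have hmB : m ≤ B := by
    have := integral_mono hqint (integrable_const B) (fun z => (hab z).2)
    simpa [hm] using this
  have havg : ∀ y : Fin K → X, A ≤ S y ∧ S y ≤ B := by
    intro y
    have h1 : (K:ℝ) * A ≤ ∑ j : Fin K, q (y j) := by
      calc (K:ℝ) * A = ∑ _j : Fin K, A := by
            simp [Finset.sum_const, Finset.card_univ, nsmul_eq_mul]
        _ ≤ ∑ j : Fin K, q (y j) := Finset.sum_le_sum fun j _ => (hab (y j)).1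
    have h2 : ∑ j : Fin K, q (y j) ≤ (K:ℝ) * B :=
      calc ∑ j : Fin K, q (y j) ≤ ∑ _j : Fin K, B :=
            Finset.sum_le_sum fun j _ => (hab (y j)).2
        _ = (K:ℝ) * B := by simp [Finset.sum_const, Finset.card_univ, nsmul_eq_mul]
    constructor
    · have h3 := mul_le_mul_of_nonneg_left h1 (le_of_lt (one_div_pos.2 hKpos))
      calc A = (1/(K:ℝ)) * ((K:ℝ)*A) := by field_simp
        _ ≤ S y := h3
    · have h3 := mul_le_mul_of_nonneg_left h2 (le_of_lt (one_div_pos.2 hKpos))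
      calc S y ≤ (1/(K:ℝ)) * ((K:ℝ)*B) := h3
        _ = B := by field_simp
  have hSmeas : Measurable S := by
    apply Measurable.const_mul
    exact Finset.measurable_sum _ fun j _ => hq.comp (measurable_pi_apply j)
  have hSint : Integrable S π := by
    refine Integrable.mono' (integrable_const B) hSmeas.aestronglyMeasurable ?_
    filter_upwards with y
    rw [Real.norm_eq_abs, abs_of_pos (hA.trans_le (havg y).1)]
    exact (havg y).2
  have hlogSint : Integrable (fun y => Real.log (S y)) π := by
    refine Integrable.mono' (integrable_const (max |Real.log A| |Real.log B|))
      (Real.measurable_log.comp hSmeas).aestronglyMeasurable ?_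
    filter_upwards with y
    rw [Real.norm_eq_abs, abs_le]
    constructor
    · have := Real.log_le_log hA (havg y).1
      have h3 : -(max |Real.log A| |Real.log B|) ≤ Real.log A :=
        le_trans (neg_le_neg (le_max_left _ _)) (neg_abs_le _)
      linarith
    · have := Real.log_le_log (hA.trans_le (havg y).1) (havg y).2
      have h3 : Real.log B ≤ max |Real.log A| |Real.log B| :=
        le_trans (le_abs_self _) (le_max_right _ _)
      linarith
  have hjint : ∀ j : Fin K, Integrable (fun y : Fin K → X => q (y j)) π := by
    intro j
    refine Integrable.mono' (integrable_const B)
      (hq.comp (measurable_pi_apply j)).aestronglyMeasurable ?_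
    filter_upwards with y
    rw [Real.norm_eq_abs, abs_of_pos (hA.trans_le (hab (y j)).1)]
    exact (hab (y j)).2
  have hSavg : ∫ y, S y ∂π = m := by
    calc ∫ y, S y ∂π = (1/(K:ℝ)) * ∫ y, (∑ j : Fin K, q (y j)) ∂π := by
          rw [hS]; exact integral_const_mul _ _
      _ = (1/(K:ℝ)) * ∑ j : Fin K, ∫ y : Fin K → X, q (y j) ∂π := by
          rw [integral_finset_sum _ (fun j _ => hjint j)]
      _ = (1/(K:ℝ)) * ∑ _j : Fin K, m := by
          rw [Finset.sum_congr rfl fun j _ => pi_integral_single μ q j]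
      _ = m := by
          simp only [Finset.sum_const, Finset.card_univ, Fintype.card_fin, nsmul_eq_mul]
          field_simp
  -- centered function
  set h : X → ℝ := fun z => q z - m with hh
  have hhmeas : Measurable h := hq.sub measurable_const
  have hh0 : ∫ z, h z ∂μ = 0 := by
    rw [hh, integral_sub hqint (integrable_const _)]
    simp [hm]
  have hhabs : ∀ z, |h z| ≤ B := by
    intro z
    simp only [hh]
    rw [abs_le]
    constructor
    · have := (hab z).1; linarith [hA.le, hmB]
    · have := (hab z).2; linarith [hA.le, hmA]
  set V : ℝ := ∫ z, h z * h z ∂μ with hV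
  have hVnonneg : 0 ≤ V := integral_nonneg fun z => mul_self_nonneg _
  have hhsqint : Integrable (fun z => h z * h z) μ := by
    refine Integrable.mono' (integrable_const (B*B)) (hhmeas.mul hhmeas).aestronglyMeasurable ?_
    filter_upwards with z
    rw [Real.norm_eq_abs, abs_mul]
    exact mul_le_mul (hhabs z) (hhabs z) (abs_nonneg _) hB.le
  have hVle : V ≤ B*B := by
    have hpt : ∀ z, h z * h z ≤ B*B := by
      intro z
      calc h z * h z = |h z| * |h z| := (abs_mul_abs_self _).symm
        _ ≤ B*B := mul_le_mul (hhabs z) (hhabs z) (abs_nonneg _) hB.le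
    have := integral_mono hhsqint (integrable_const (B*B)) hpt
    simpa [hV] using this
  have hpairint : ∀ i j : Fin K, Integrable (fun y : Fin K → X => h (y i) * h (y j)) π := by
    intro i j
    refine Integrable.mono' (integrable_const (B*B))
      (((hhmeas.comp (measurable_pi_apply i)).mul
        (hhmeas.comp (measurable_pi_apply j)))).aestronglyMeasurable ?_
    filter_upwards with y
    rw [Real.norm_eq_abs, abs_mul]
    exact mul_le_mul (hhabs _) (hhabs _) (abs_nonneg _) hB.le
  have hterm : ∀ i j : Fin K,
      (∫ y : Fin K → X, h (y i) * h (y j) ∂π) = if i = j then V else 0 := by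
    intro i j
    by_cases hij : i = j
    · subst hij
      rw [if_pos rfl, hV]
      exact pi_integral_single μ (fun z => h z * h z) i
    · rw [if_neg hij, pi_integral_pair μ h h hij, hh0, mul_zero]
  have hSm : ∀ y, S y - m = (1/(K:ℝ)) * ∑ j : Fin K, h (y j) := by
    intro y
    have e1 : ∑ j : Fin K, h (y j) = (∑ j : Fin K, q (y j)) - K * m := by
      rw [hh]
      rw [Finset.sum_sub_distrib]
      simp [Finset.sum_const, Finset.card_univ, nsmul_eq_mul]
    rw [e1, hS]
    field_simp
  have hvarint : Integrable (fun y => (S y - m) * (S y - m)) π := by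
    refine Integrable.mono' (integrable_const (B*B))
      (((hSmeas.sub measurable_const).mul (hSmeas.sub measurable_const))).aestronglyMeasurable ?_
    filter_upwards with y
    have habs : |S y - m| ≤ B := by
      rw [abs_le]
      constructor
      · have := (havg y).1; linarith [hA.le, hmB]
      · have := (havg y).2; linarith [hA.le, hmA]
    rw [Real.norm_eq_abs, abs_mul]
    exact mul_le_mul habs habs (abs_nonneg _) hB.le
  have hVar : ∫ y, (S y - m) * (S y - m) ∂π = V / K := by
    have e1 : ∀ y, (S y - m) * (S y - m)
        = (1/(K:ℝ)) * ((1/(K:ℝ)) * ∑ i : Fin K, ∑ j : Fin K, h (y i) * h (y j)) := by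
      intro y
      calc (S y - m) * (S y - m)
          = (1/(K:ℝ)) * ((1/(K:ℝ)) * ((∑ j : Fin K, h (y j)) * (∑ j : Fin K, h (y j)))) := by
            rw [hSm y]; ring
        _ = _ := by rw [Finset.sum_mul_sum]
    calc ∫ y, (S y - m) * (S y - m) ∂π
        = (1/(K:ℝ)) * ((1/(K:ℝ)) * ∫ y, (∑ i : Fin K, ∑ j : Fin K, h (y i) * h (y j)) ∂π) := by
          simp only [e1]
          rw [integral_const_mul, integral_const_mul]
      _ = (1/(K:ℝ)) * ((1/(K:ℝ)) * ∑ i : Fin K, ∑ j : Fin K, ∫ y, h (y i) * h (y j) ∂π) := by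
          rw [integral_finset_sum _ (fun i _ => integrable_finset_sum _ (fun j _ => hpairint i j))]
          congr 2
          exact Finset.sum_congr rfl fun i _ => integral_finset_sum _ (fun j _ => hpairint i j)
      _ = (1/(K:ℝ)) * ((1/(K:ℝ)) * ∑ _i : Fin K, V) := by
          congr 2
          refine Finset.sum_congr rfl fun i _ => ?_
          rw [Finset.sum_congr rfl fun j _ => hterm i j]
          simp
      _ = V / K := by
          simp only [Finset.sum_const, Finset.card_univ, Fintype.card_fin, nsmul_eq_mul]
          field_simp
  have hint1 : Integrable (fun y : Fin K → X => (S y - m)/m) π :=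
    (hSint.sub (integrable_const m)).div_const m
  have hint2 : Integrable (fun y : Fin K → X => ((S y - m)*(S y - m))/(A*A)) π :=
    hvarint.div_const _
  have hint3 : Integrable (fun y : Fin K → X => Real.log m + (S y - m)/m) π :=
    (integrable_const _).add hint1
  -- upper bound
  have hupper : (∫ y, Real.log (S y) ∂π) ≤ Real.log m := by
    have hmono := integral_mono hlogSint hint3
      (fun y => (log_taylor_bounds hA hmA (havg y).1).2)
    calc (∫ y, Real.log (S y) ∂π) ≤ ∫ y, (Real.log m + (S y - m)/m) ∂π := hmono
      _ = Real.log m := by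
        rw [integral_add (integrable_const (Real.log m)) hint1,
          integral_div, integral_sub hSint (integrable_const m), hSavg]
        simp
  -- lower bound
  have hlower : Real.log m - (1/(A*A)) * (V/K) ≤ ∫ y, Real.log (S y) ∂π := by
    have hlint : Integrable (fun y : Fin K → X => Real.log m + (S y - m)/m
        - ((S y - m)*(S y - m))/(A*A)) π := hint3.sub hint2
    have hmono := integral_mono hlint hlogSint
      (fun y => (log_taylor_bounds hA hmA (havg y).1).1)
    calc Real.log m - (1/(A*A)) * (V/K)
        = ∫ y, (Real.log m + (S y - m)/m - ((S y - m)*(S y - m))/(A*A)) ∂π := by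
          rw [integral_sub hint3 hint2,
            integral_add (integrable_const (Real.log m)) hint1,
            integral_div, integral_sub hSint (integrable_const m), hSavg, integral_div, hVar]
          simp
          ring
      _ ≤ _ := hmono
  have hfrac : (1/(A*A)) * (V/K) ≤ ((B*B)/(A*A)) / K := by
    have h1 : V / K ≤ (B*B)/K := by gcongr
    calc (1/(A*A)) * (V/K) ≤ (1/(A*A)) * ((B*B)/K) :=
          mul_le_mul_of_nonneg_left h1 (by positivity)
      _ = ((B*B)/(A*A)) / K := by field_simp
  have hCK : 0 ≤ ((B*B)/(A*A)) / (K:ℝ) := by positivity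
  rw [abs_le]
  constructor
  · linarith
  · linarith


lemma aux_tendsto {X : Type*} [MeasurableSpace X] (μ : Measure X) [IsProbabilityMeasure μ]
    (g : X → X → ℝ) (hg : Measurable (Function.uncurry g))
    {A B : ℝ} (hA : 0 < A) (hab : ∀ x y, A ≤ g x y ∧ g x y ≤ B) :
    Tendsto (fun K : ℕ => ∫ p : X × (Fin K → X),
        Real.log ((1/(K:ℝ)) * ∑ j : Fin K, g p.1 (p.2 j))
        ∂(μ.prod (Measure.pi fun _ : Fin K => μ)))
      atTop (nhds (∫ x, Real.log (∫ y, g x y ∂μ) ∂μ)) := by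
  have hX : Nonempty X := by
    by_contra h
    rw [not_nonempty_iff] at h
    have h0 : μ Set.univ = 1 := measure_univ
    rw [Set.univ_eq_empty_iff.mpr h, measure_empty] at h0
    exact zero_ne_one h0
  obtain ⟨x₀⟩ := hX
  have hAB : A ≤ B := (hab x₀ x₀).1.trans (hab x₀ x₀).2
  have hB : 0 < B := hA.trans_le hAB
  set M : ℝ := max |Real.log A| |Real.log B| with hM
  have hlogbound : ∀ t : ℝ, A ≤ t → t ≤ B → |Real.log t| ≤ M := by
    intro t h1 h2
    rw [abs_le]
    constructor
    · have := Real.log_le_log hA h1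
      have h3 : -M ≤ Real.log A := le_trans (neg_le_neg (le_max_left _ _)) (neg_abs_le _)
      linarith
    · have := Real.log_le_log (hA.trans_le h1) h2
      have h3 : Real.log B ≤ M := le_trans (le_abs_self _) (le_max_right _ _)
      linarith
  have hgx : ∀ x, Measurable (g x) := fun x => hg.comp measurable_prodMk_left
  have hgint : ∀ x, Integrable (g x) μ := by
    intro x
    refine Integrable.mono' (integrable_const B) (hgx x).aestronglyMeasurable ?_
    filter_upwards with y
    rw [Real.norm_eq_abs, abs_of_pos (hA.trans_le (hab x y).1)]
    exact (hab x y).2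
  have hmA : ∀ x, A ≤ ∫ y, g x y ∂μ := by
    intro x
    have := integral_mono (integrable_const A) (hgint x) (fun y => (hab x y).1)
    simpa using this
  have hmB : ∀ x, (∫ y, g x y ∂μ) ≤ B := by
    intro x
    have := integral_mono (hgint x) (integrable_const B) (fun y => (hab x y).2)
    simpa using this
  have hm_meas : StronglyMeasurable (fun x => ∫ y, g x y ∂μ) :=
    hg.stronglyMeasurable.integral_prod_right'
  have hlogmint : Integrable (fun x => Real.log (∫ y, g x y ∂μ)) μ := by
    refine Integrable.mono' (integrable_const M)
      (Real.measurable_log.comp hm_meas.measurable).aestronglyMeasurable ?_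
    filter_upwards with x
    rw [Real.norm_eq_abs]
    exact hlogbound _ (hmA x) (hmB x)
  have key : ∀ K : ℕ, 1 ≤ K →
      |(∫ p : X × (Fin K → X),
          Real.log ((1/(K:ℝ)) * ∑ j : Fin K, g p.1 (p.2 j))
          ∂(μ.prod (Measure.pi fun _ : Fin K => μ)))
        - ∫ x, Real.log (∫ y, g x y ∂μ) ∂μ| ≤ ((B*B)/(A*A)) / K := by
    intro K hK
    have hKpos : (0:ℝ) < K := by exact_mod_cast hK
    set π : Measure (Fin K → X) := Measure.pi fun _ : Fin K => μ with hπ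
    haveI : IsProbabilityMeasure π := by
      rw [hπ]; exact MeasureTheory.Measure.pi.instIsProbabilityMeasure _
    have havg : ∀ (x : X) (y : Fin K → X),
        A ≤ (1/(K:ℝ)) * ∑ j : Fin K, g x (y j)
          ∧ (1/(K:ℝ)) * ∑ j : Fin K, g x (y j) ≤ B := by
      intro x y
      have h1 : (K:ℝ) * A ≤ ∑ j : Fin K, g x (y j) := by
        calc (K:ℝ) * A = ∑ _j : Fin K, A := by
              simp [Finset.sum_const, Finset.card_univ, nsmul_eq_mul]
          _ ≤ ∑ j : Fin K, g x (y j) := Finset.sum_le_sum fun j _ => (hab x (y j)).1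
      have h2 : ∑ j : Fin K, g x (y j) ≤ (K:ℝ) * B :=
        calc ∑ j : Fin K, g x (y j) ≤ ∑ _j : Fin K, B :=
              Finset.sum_le_sum fun j _ => (hab x (y j)).2
          _ = (K:ℝ) * B := by simp [Finset.sum_const, Finset.card_univ, nsmul_eq_mul]
      constructor
      · have h3 := mul_le_mul_of_nonneg_left h1 (le_of_lt (one_div_pos.2 hKpos))
        calc A = (1/(K:ℝ)) * ((K:ℝ)*A) := by field_simp
          _ ≤ _ := h3
      · have h3 := mul_le_mul_of_nonneg_left h2 (le_of_lt (one_div_pos.2 hKpos))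
        calc (1/(K:ℝ)) * ∑ j : Fin K, g x (y j) ≤ (1/(K:ℝ)) * ((K:ℝ)*B) := h3
          _ = B := by field_simp
    have hbigmeas : Measurable (fun p : X × (Fin K → X) =>
        Real.log ((1/(K:ℝ)) * ∑ j : Fin K, g p.1 (p.2 j))) := by
      apply Real.measurable_log.comp
      apply Measurable.const_mul
      exact Finset.measurable_sum _ fun j _ =>
        hg.comp (measurable_fst.prodMk ((measurable_pi_apply j).comp measurable_snd))
    have hbigint : Integrable (fun p : X × (Fin K → X) =>
        Real.log ((1/(K:ℝ)) * ∑ j : Fin K, g p.1 (p.2 j))) (μ.prod π) := by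
      refine Integrable.mono' (integrable_const M) hbigmeas.aestronglyMeasurable ?_
      filter_upwards with p
      rw [Real.norm_eq_abs]
      exact hlogbound _ (havg p.1 p.2).1 (havg p.1 p.2).2
    have hIint : Integrable (fun x => ∫ y : Fin K → X,
        Real.log ((1/(K:ℝ)) * ∑ j : Fin K, g x (y j)) ∂π) μ := hbigint.integral_prod_left
    rw [integral_prod _ hbigint]
    have hfub : (∫ x, ∫ y : Fin K → X,
        Real.log ((1/(K:ℝ)) * ∑ j : Fin K, g x (y j)) ∂π ∂μ)
        - (∫ x, Real.log (∫ y, g x y ∂μ) ∂μ)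
        = ∫ x, ((∫ y : Fin K → X,
            Real.log ((1/(K:ℝ)) * ∑ j : Fin K, g x (y j)) ∂π)
          - Real.log (∫ y, g x y ∂μ)) ∂μ := (integral_sub hIint hlogmint).symm
    rw [hfub]
    have hinner : ∀ x : X,
        |(∫ y : Fin K → X, Real.log ((1/(K:ℝ)) * ∑ j : Fin K, g x (y j)) ∂π)
          - Real.log (∫ y, g x y ∂μ)| ≤ ((B*B)/(A*A)) / K := by
      intro x
      exact pi_log_avg_bound μ hK (g x) (hgx x) hA (fun z => hab x z)
    calc |∫ x, ((∫ y : Fin K → X,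
            Real.log ((1/(K:ℝ)) * ∑ j : Fin K, g x (y j)) ∂π)
          - Real.log (∫ y, g x y ∂μ)) ∂μ|
        ≤ ∫ x, |(∫ y : Fin K → X,
            Real.log ((1/(K:ℝ)) * ∑ j : Fin K, g x (y j)) ∂π)
          - Real.log (∫ y, g x y ∂μ)| ∂μ := by
          exact norm_integral_le_integral_norm (fun x => (∫ y : Fin K → X,
            Real.log ((1/(K:ℝ)) * ∑ j : Fin K, g x (y j)) ∂π)
            - Real.log (∫ y, g x y ∂μ))
      _ ≤ ∫ _x, ((B*B)/(A*A)) / (K:ℝ) ∂μ :=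
          integral_mono (hIint.sub hlogmint).abs (integrable_const _) hinner
      _ = ((B*B)/(A*A)) / K := by simp
  rw [tendsto_iff_norm_sub_tendsto_zero]
  refine squeeze_zero' (Eventually.of_forall fun K => norm_nonneg _) ?_
    (tendsto_const_div_atTop_nhds_zero_nat ((B*B)/(A*A)))
  filter_upwards [eventually_ge_atTop 1] with K hK
  rw [Real.norm_eq_abs]
  exact key K hK

set_option maxHeartbeats 2000000 in
/-- Convergence of the negative-sampling contrastive loss: for a measurable encoder
`f : X → S^{d-1}` and i.i.d. samples `x, x₁, …, x_K ~ μ`, the quantity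
`L_neg(f; τ, K) = E[log ((1/K) ∑_j exp (⟪f x, f x_j⟫ / τ))]` converges, as `K → ∞`,
to `∫ log (∫ exp (⟪f x, f x'⟫ / τ) dμ(x')) dμ(x)`. -/
theorem tendsto_contrastive_neg_loss
    {X : Type*} [MeasurableSpace X] [StandardBorelSpace X]
    (μ : Measure X) [IsProbabilityMeasure μ]
    {d : ℕ} (hd : 2 ≤ d) {τ : ℝ} (hτ : 0 < τ)
    (f : X → sphere (0 : EuclideanSpace ℝ (Fin d)) 1) (hf : Measurable f) :
    Tendsto
      (fun K : ℕ =>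
        ∫ p : X × (Fin K → X),
          Real.log ((1 / (K : ℝ)) * ∑ j : Fin K,
            Real.exp ((inner ℝ (f p.1 : EuclideanSpace ℝ (Fin d))
              (f (p.2 j) : EuclideanSpace ℝ (Fin d)) : ℝ) / τ))
          ∂(μ.prod (Measure.pi fun _ : Fin K => μ)))
      atTop
      (nhds (∫ x, Real.log (∫ x',
        Real.exp ((inner ℝ (f x : EuclideanSpace ℝ (Fin d))
          (f x' : EuclideanSpace ℝ (Fin d)) : ℝ) / τ) ∂μ) ∂μ)) := by
  have hF : Measurable (fun x => (f x : EuclideanSpace ℝ (Fin d))) :=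
    continuous_subtype_val.measurable.comp hf
  have hg : Measurable (Function.uncurry (fun x y : X =>
      Real.exp ((inner ℝ (f x : EuclideanSpace ℝ (Fin d))
        (f y : EuclideanSpace ℝ (Fin d)) : ℝ) / τ))) := by
    apply Real.measurable_exp.comp
    apply Measurable.div_const
    exact (hF.comp measurable_fst).inner (hF.comp measurable_snd)
  have hinner_abs : ∀ x y : X,
      |(inner ℝ (f x : EuclideanSpace ℝ (Fin d))
        (f y : EuclideanSpace ℝ (Fin d)) : ℝ)| ≤ 1 := by
    intro x y
    calc |(inner ℝ (f x : EuclideanSpace ℝ (Fin d))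
          (f y : EuclideanSpace ℝ (Fin d)) : ℝ)|
        ≤ ‖(f x : EuclideanSpace ℝ (Fin d))‖ * ‖(f y : EuclideanSpace ℝ (Fin d))‖ :=
          abs_real_inner_le_norm _ _
      _ = 1 := by rw [norm_eq_of_mem_sphere, norm_eq_of_mem_sphere, one_mul]
  have hab : ∀ x y : X,
      Real.exp (-(1/τ)) ≤ Real.exp ((inner ℝ (f x : EuclideanSpace ℝ (Fin d))
          (f y : EuclideanSpace ℝ (Fin d)) : ℝ) / τ)
        ∧ Real.exp ((inner ℝ (f x : EuclideanSpace ℝ (Fin d))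
          (f y : EuclideanSpace ℝ (Fin d)) : ℝ) / τ) ≤ Real.exp (1/τ) := by
    intro x y
    have h := abs_le.mp (hinner_abs x y)
    constructor
    · rw [Real.exp_le_exp]
      have e1 : -(1/τ) = (-1)/τ := by ring
      rw [e1]
      exact div_le_div_of_nonneg_right h.1 hτ.le
    · rw [Real.exp_le_exp]
      exact div_le_div_of_nonneg_right h.2 hτ.le
  exact aux_tendsto μ _ hg (Real.exp_pos (-(1/τ))) hab
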